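/- arXiv:2112.13010 — 2 statements merged into one kernel-verified Lean document; each statement's English description precedes it below -/
import Mathlib

section
/- Let ψ : ℂ³ → ℂ³ be ψ(z₁,z₂,z₃) = (−z₁, −z₂, z₃) (i.e., ψ = σ²). A point z ∈ ℂ³ satisfies ψ(z) ∼ z if and only if z is Γ-equivalent to a point (a, b, w) with w ∈ ℂ and (a,b) belonging to the 8-element set {(0,0), (0,1/2), (0,i/2), (0,(1+i)/2), (1/2,0), (i/2,0), ((1+i)/2,0), ((1+i)/2,(1+i)/2)}. Moreover, points (a,b,w) and (a′,b′,w′) with (a,b) ≠ (a′,b′) taken from this set are never Γ-equivalent, so the fixed-point locus of the induced map ψ on M = Γ\G is the disjoint union of the 8 curves {[(a,b,w)] : w ∈ ℂ}. -/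
/-- The complex Heisenberg group operation on ℂ³. -/
def heisMul (z w : ℂ × ℂ × ℂ) : ℂ × ℂ × ℂ :=
  (z.1 + w.1, z.2.1 + w.2.1, z.2.2 + z.1 * w.2.1 + w.2.2)

/-- The Gaussian integers, viewed as a subset of ℂ. -/
def GInt : Set ℂ := {z | ∃ a b : ℤ, z = (a : ℂ) + (b : ℂ) * Complex.I}

/-- The lattice Γ = (ℤ[i])³ ⊆ ℂ³. -/
def inGamma (γ : ℂ × ℂ × ℂ) : Prop := γ.1 ∈ GInt ∧ γ.2.1 ∈ GInt ∧ γ.2.2 ∈ GInt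

/-- Γ-equivalence: z ∼ z′ iff z′ = γ ⋆ z for some γ ∈ Γ. -/
def gammaEquiv (z z' : ℂ × ℂ × ℂ) : Prop := ∃ γ, inGamma γ ∧ z' = heisMul γ z

/-- The map ψ(z₁,z₂,z₃) = (−z₁, −z₂, z₃), i.e. ψ = σ². -/
def psiMap (z : ℂ × ℂ × ℂ) : ℂ × ℂ × ℂ := (-z.1, -z.2.1, z.2.2)

open Complex in
/-- The 8 values (a,b) of the first two coordinates of the fixed curves of ψ. -/
def psiFixedAB : Set (ℂ × ℂ) :=
  {(0, 0), (0, 1/2), (0, I/2), (0, (1 + I)/2),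
   (1/2, 0), (I/2, 0), ((1 + I)/2, 0), ((1 + I)/2, (1 + I)/2)}

open Complex

lemma gint_zero : (0:ℂ) ∈ GInt := ⟨0,0, by norm_num⟩
lemma gint_one : (1:ℂ) ∈ GInt := ⟨1,0, by norm_num⟩
lemma gint_I : (I:ℂ) ∈ GInt := ⟨0,1, by norm_num⟩
lemma gint_onepI : (1+I:ℂ) ∈ GInt := ⟨1,1, by norm_num⟩
lemma gint_add {x y : ℂ} (hx : x ∈ GInt) (hy : y ∈ GInt) : x + y ∈ GInt := by
  obtain ⟨a,b,rfl⟩ := hx; obtain ⟨c,d,rfl⟩ := hy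
  exact ⟨a+c, b+d, by push_cast; ring⟩
lemma gint_neg {x : ℂ} (hx : x ∈ GInt) : -x ∈ GInt := by
  obtain ⟨a,b,rfl⟩ := hx; exact ⟨-a, -b, by push_cast; ring⟩
lemma gint_mul {x y : ℂ} (hx : x ∈ GInt) (hy : y ∈ GInt) : x * y ∈ GInt := by
  obtain ⟨a,b,rfl⟩ := hx; obtain ⟨c,d,rfl⟩ := hy
  exact ⟨a*c - b*d, a*d + b*c, by push_cast; ring_nf; rw [Complex.I_sq]; ring⟩
lemma gint_sub {x y : ℂ} (hx : x ∈ GInt) (hy : y ∈ GInt) : x - y ∈ GInt := by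
  rw [sub_eq_add_neg]; exact gint_add hx (gint_neg hy)

lemma not_gint_half {x : ℂ} (h : x.re = 1/2 ∨ x.re = -(1/2) ∨ x.im = 1/2 ∨ x.im = -(1/2)) : x ∉ GInt := by
  rintro ⟨a,b,rfl⟩
  simp at h
  rcases h with h|h|h|h
  · have h3 : (2*a : ℤ) = 1 := by exact_mod_cast (by push_cast; linarith : ((2*a:ℤ):ℝ) = 1)
    omega
  · have h3 : (2*a : ℤ) = -1 := by exact_mod_cast (by push_cast; linarith : ((2*a:ℤ):ℝ) = -1)
    omega
  · have h3 : (2*b : ℤ) = 1 := by exact_mod_cast (by push_cast; linarith : ((2*b:ℤ):ℝ) = 1)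
    omega
  · have h3 : (2*b : ℤ) = -1 := by exact_mod_cast (by push_cast; linarith : ((2*b:ℤ):ℝ) = -1)
    omega

lemma gammaEquiv_symm {z z' : ℂ × ℂ × ℂ} (h : gammaEquiv z z') : gammaEquiv z' z := by
  obtain ⟨γ, ⟨h1, h2, h3⟩, heq⟩ := h
  refine ⟨(-γ.1, -γ.2.1, γ.1*γ.2.1 - γ.2.2), ⟨gint_neg h1, gint_neg h2, gint_sub (gint_mul h1 h2) h3⟩, ?_⟩
  rw [heq]
  simp only [heisMul, Prod.ext_iff]
  refine ⟨by ring, by ring, by ring⟩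

lemma gammaEquiv_trans {z z' z'' : ℂ × ℂ × ℂ} (h : gammaEquiv z z') (h' : gammaEquiv z' z'') :
    gammaEquiv z z'' := by
  obtain ⟨γ, ⟨h1, h2, h3⟩, heq⟩ := h
  obtain ⟨δ, ⟨g1, g2, g3⟩, geq⟩ := h'
  refine ⟨(δ.1 + γ.1, δ.2.1 + γ.2.1, δ.2.2 + δ.1*γ.2.1 + γ.2.2),
    ⟨gint_add g1 h1, gint_add g2 h2, gint_add (gint_add g3 (gint_mul g1 h2)) h3⟩, ?_⟩
  rw [geq, heq]
  simp only [heisMul, Prod.ext_iff]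
  refine ⟨by ring, by ring, by ring⟩

lemma gammaEquiv_psi {z z' : ℂ × ℂ × ℂ} (h : gammaEquiv z z') :
    gammaEquiv (psiMap z) (psiMap z') := by
  obtain ⟨γ, ⟨h1, h2, h3⟩, heq⟩ := h
  refine ⟨(-γ.1, -γ.2.1, γ.2.2), ⟨gint_neg h1, gint_neg h2, h3⟩, ?_⟩
  rw [heq]
  simp only [heisMul, psiMap, Prod.ext_iff]
  refine ⟨by ring, by ring, by ring⟩

lemma build_equiv (z : ℂ × ℂ × ℂ) (a b : ℂ) (h1 : z.1 - a ∈ GInt) (h2 : z.2.1 - b ∈ GInt) :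
    ∃ w, gammaEquiv (a, b, w) z := by
  refine ⟨z.2.2 - (z.1 - a) * b, (z.1 - a, z.2.1 - b, 0), ⟨h1, h2, gint_zero⟩, ?_⟩
  simp only [heisMul, Prod.ext_iff]
  refine ⟨by ring, by ring, by ring⟩

lemma fixed_on_curve : ∀ ab ∈ psiFixedAB, ∀ w : ℂ,
    gammaEquiv (psiMap (ab.1, ab.2, w)) (ab.1, ab.2, w) := by
  intro ab hab w
  simp only [psiFixedAB, Set.mem_insert_iff, Set.mem_singleton_iff] at hab
  rcases hab with rfl|rfl|rfl|rfl|rfl|rfl|rfl|rfl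
  · exact ⟨(0,0,0), ⟨gint_zero, gint_zero, gint_zero⟩, by
      simp only [heisMul, psiMap, Prod.ext_iff]; refine ⟨by ring, by ring, by ring⟩⟩
  · exact ⟨(0,1,0), ⟨gint_zero, gint_one, gint_zero⟩, by
      simp only [heisMul, psiMap, Prod.ext_iff]; refine ⟨by ring, by ring, by ring⟩⟩
  · exact ⟨(0,I,0), ⟨gint_zero, gint_I, gint_zero⟩, by
      simp only [heisMul, psiMap, Prod.ext_iff]; refine ⟨by ring, by ring, by ring⟩⟩
  · exact ⟨(0,1+I,0), ⟨gint_zero, gint_onepI, gint_zero⟩, by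
      simp only [heisMul, psiMap, Prod.ext_iff]; refine ⟨by ring, by ring, by ring⟩⟩
  · exact ⟨(1,0,0), ⟨gint_one, gint_zero, gint_zero⟩, by
      simp only [heisMul, psiMap, Prod.ext_iff]; refine ⟨by ring, by ring, by ring⟩⟩
  · exact ⟨(I,0,0), ⟨gint_I, gint_zero, gint_zero⟩, by
      simp only [heisMul, psiMap, Prod.ext_iff]; refine ⟨by ring, by ring, by ring⟩⟩
  · exact ⟨(1+I,0,0), ⟨gint_onepI, gint_zero, gint_zero⟩, by
      simp only [heisMul, psiMap, Prod.ext_iff]; refine ⟨by ring, by ring, by ring⟩⟩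
  · refine ⟨(1+I,1+I,I), ⟨gint_onepI, gint_onepI, gint_I⟩, ?_⟩
    simp only [heisMul, psiMap, Prod.ext_iff]
    refine ⟨by ring, by ring, ?_⟩
    have : I*I = -1 := Complex.I_mul_I
    field_simp
    linear_combination this


lemma mem1 : ((0:ℂ),(0:ℂ)) ∈ psiFixedAB := by left; rfl
lemma mem2 : ((0:ℂ),(1/2:ℂ)) ∈ psiFixedAB := by right; left; rfl
lemma mem3 : ((0:ℂ),(I/2:ℂ)) ∈ psiFixedAB := by right; right; left; rfl
lemma mem4 : ((0:ℂ),((1+I)/2:ℂ)) ∈ psiFixedAB := by right; right; right; left; rfl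
lemma mem5 : ((1/2:ℂ),(0:ℂ)) ∈ psiFixedAB := by right; right; right; right; left; rfl
lemma mem6 : ((I/2:ℂ),(0:ℂ)) ∈ psiFixedAB := by right; right; right; right; right; left; rfl
lemma mem7 : (((1+I)/2:ℂ),(0:ℂ)) ∈ psiFixedAB := by right; right; right; right; right; right; left; rfl
lemma mem8 : (((1+I)/2:ℂ),((1+I)/2:ℂ)) ∈ psiFixedAB := by right; right; right; right; right; right; right; rfl

set_option maxHeartbeats 2000000 in
theorem psi_fixed_locus_eight_curves :
    (∀ z : ℂ × ℂ × ℂ, gammaEquiv (psiMap z) z ↔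
      ∃ ab ∈ psiFixedAB, ∃ w : ℂ, gammaEquiv (ab.1, ab.2, w) z) ∧
    (∀ ab ∈ psiFixedAB, ∀ ab' ∈ psiFixedAB, ab ≠ ab' →
      ∀ w w' : ℂ, ¬ gammaEquiv (ab.1, ab.2, w) (ab'.1, ab'.2, w')) := by
  constructor
  · intro z
    constructor
    · rintro ⟨γ, ⟨hg1, hg2, hg3⟩, heq⟩
      simp only [heisMul, psiMap, Prod.ext_iff] at heq
      obtain ⟨e1, e2, e3⟩ := heq
      -- γ.1 = 2 z.1, γ.2.1 = 2 z.2.1, γ.2.2 = γ.1 * z.2.1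
      have k1 : γ.1 = 2 * z.1 := by linear_combination -e1
      have k2 : γ.2.1 = 2 * z.2.1 := by linear_combination -e2
      have k3 : γ.2.2 = 2 * z.1 * z.2.1 := by linear_combination -e3 + z.2.1 * k1
      rw [k1] at hg1; rw [k2] at hg2; rw [k3] at hg3
      obtain ⟨a1, b1, f1⟩ := hg1
      obtain ⟨a2, b2, f2⟩ := hg2
      obtain ⟨c, d, f3⟩ := hg3
      have key : (2*c : ℂ) + (2*d)*I = (a1*a2 - b1*b2) + (a1*b2 + b1*a2)*I := by
        have : (2 : ℂ) * (2 * z.1 * z.2.1) = (2*z.1) * (2*z.2.1) := by ring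
        rw [f3, f1, f2] at this
        have hI : I*I = -1 := Complex.I_mul_I
        linear_combination this + ((b1*b2 : ℂ)) * hI
      have hre := congrArg Complex.re key
      have him := congrArg Complex.im key
      push_cast at hre him
      simp at hre him
      have hc : 2*c = a1*a2 - b1*b2 := by exact_mod_cast (by push_cast at hre ⊢; linarith : ((2*c:ℤ):ℝ) = ((a1*a2 - b1*b2 : ℤ):ℝ))
      have hd : 2*d = a1*b2 + b1*a2 := by exact_mod_cast (by push_cast at him ⊢; linarith : ((2*d:ℤ):ℝ) = ((a1*b2 + b1*a2 : ℤ):ℝ))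
      -- parity case analysis
      rcases Int.even_or_odd a1 with ⟨p1, hp1⟩ | ⟨p1, hp1⟩ <;>
      rcases Int.even_or_odd b1 with ⟨q1, hq1⟩ | ⟨q1, hq1⟩ <;>
      rcases Int.even_or_odd a2 with ⟨p2, hp2⟩ | ⟨p2, hp2⟩ <;>
      rcases Int.even_or_odd b2 with ⟨q2, hq2⟩ | ⟨q2, hq2⟩
      · subst hp1 hq1 hp2 hq2
        push_cast at f1 f2
        exact ⟨((0:ℂ), (0:ℂ)), mem1, build_equiv z 0 0 ⟨p1, q1, by linear_combination f1/2⟩ ⟨p2, q2, by linear_combination f2/2⟩⟩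
      · subst hp1 hq1 hp2 hq2
        push_cast at f1 f2
        exact ⟨((0:ℂ), (I/2:ℂ)), mem3, build_equiv z 0 (I/2) ⟨p1, q1, by linear_combination f1/2⟩ ⟨p2, q2, by linear_combination f2/2⟩⟩
      · subst hp1 hq1 hp2 hq2
        push_cast at f1 f2
        exact ⟨((0:ℂ), (1/2:ℂ)), mem2, build_equiv z 0 (1/2) ⟨p1, q1, by linear_combination f1/2⟩ ⟨p2, q2, by linear_combination f2/2⟩⟩
      · subst hp1 hq1 hp2 hq2
        push_cast at f1 f2
        exact ⟨((0:ℂ), ((1+I)/2:ℂ)), mem4, build_equiv z 0 ((1+I)/2) ⟨p1, q1, by linear_combination f1/2⟩ ⟨p2, q2, by linear_combination f2/2⟩⟩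
      · subst hp1 hq1 hp2 hq2
        push_cast at f1 f2
        exact ⟨((I/2:ℂ), (0:ℂ)), mem6, build_equiv z (I/2) 0 ⟨p1, q1, by linear_combination f1/2⟩ ⟨p2, q2, by linear_combination f2/2⟩⟩
      · subst hp1 hq1 hp2 hq2
        ring_nf at hc hd
        omega
      · subst hp1 hq1 hp2 hq2
        ring_nf at hc hd
        omega
      · subst hp1 hq1 hp2 hq2
        ring_nf at hc hd
        omega
      · subst hp1 hq1 hp2 hq2
        push_cast at f1 f2
        exact ⟨((1/2:ℂ), (0:ℂ)), mem5, build_equiv z (1/2) 0 ⟨p1, q1, by linear_combination f1/2⟩ ⟨p2, q2, by linear_combination f2/2⟩⟩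
      · subst hp1 hq1 hp2 hq2
        ring_nf at hc hd
        omega
      · subst hp1 hq1 hp2 hq2
        ring_nf at hc hd
        omega
      · subst hp1 hq1 hp2 hq2
        ring_nf at hc hd
        omega
      · subst hp1 hq1 hp2 hq2
        push_cast at f1 f2
        exact ⟨(((1+I)/2:ℂ), (0:ℂ)), mem7, build_equiv z ((1+I)/2) 0 ⟨p1, q1, by linear_combination f1/2⟩ ⟨p2, q2, by linear_combination f2/2⟩⟩
      · subst hp1 hq1 hp2 hq2
        ring_nf at hc hd
        omega
      · subst hp1 hq1 hp2 hq2
        ring_nf at hc hd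
        omega
      · subst hp1 hq1 hp2 hq2
        push_cast at f1 f2
        exact ⟨(((1+I)/2:ℂ), ((1+I)/2:ℂ)), mem8, build_equiv z ((1+I)/2) ((1+I)/2) ⟨p1, q1, by linear_combination f1/2⟩ ⟨p2, q2, by linear_combination f2/2⟩⟩
    · rintro ⟨ab, hab, w, h⟩
      have h1 := fixed_on_curve ab hab w
      have h2 := gammaEquiv_psi h
      exact gammaEquiv_trans (gammaEquiv_trans (gammaEquiv_symm h2) h1) h
  · intro ab hab ab' hab' hne w w' h
    obtain ⟨γ, ⟨hg1, hg2, hg3⟩, heq⟩ := h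
    simp only [heisMul, Prod.ext_iff] at heq
    obtain ⟨e1, e2, e3⟩ := heq
    have d1 : ab'.1 - ab.1 ∈ GInt := by rw [e1]; simpa using hg1
    have d2 : ab'.2 - ab.2 ∈ GInt := by rw [e2]; simpa using hg2
    clear e1 e2 e3 hg1 hg2 hg3
    simp only [psiFixedAB, Set.mem_insert_iff, Set.mem_singleton_iff] at hab hab'
    rcases hab with rfl|rfl|rfl|rfl|rfl|rfl|rfl|rfl <;>
    rcases hab' with rfl|rfl|rfl|rfl|rfl|rfl|rfl|rfl <;>
    first
    | exact hne rfl
    | (refine absurd d1 (not_gint_half ?_); norm_num [Complex.div_re, Complex.div_im]; done)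
    | (refine absurd d2 (not_gint_half ?_); norm_num [Complex.div_re, Complex.div_im]; done)
end

section
/- The quotient topological space of ℂ³ (with its standard topology) by the Γ-equivalence relation z ∼ γ ⋆ z (γ ∈ Γ), endowed with the quotient topology, is compact. -/
/-- The Iwasawa manifold M = Γ\G as a quotient topological space
(ℂ³ carries its standard topology, the quotient the quotient topology). -/
def IwasawaQuot : Type := Quot gammaEquiv

noncomputable instance : TopologicalSpace IwasawaQuot :=
  instTopologicalSpaceQuot (r := gammaEquiv)

/-- The unit square in ℂ. -/
def unitBox : Set ℂ := {z : ℂ | z.re ∈ Set.Icc (0:ℝ) 1 ∧ z.im ∈ Set.Icc (0:ℝ) 1}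

lemma unitBox_compact : IsCompact unitBox := by
  have h : unitBox =
      (fun p : ℝ × ℝ => Complex.mk p.1 p.2) '' (Set.Icc 0 1 ×ˢ Set.Icc 0 1) := by
    ext z
    constructor
    · rintro ⟨h1, h2⟩
      exact ⟨(z.re, z.im), ⟨h1, h2⟩, rfl⟩
    · rintro ⟨⟨a, b⟩, ⟨h1, h2⟩, rfl⟩
      exact ⟨h1, h2⟩
  rw [h]
  apply ((isCompact_Icc.prod isCompact_Icc)).image
  exact Complex.equivRealProdCLM.symm.continuous

lemma exists_gint_add_mem (w : ℂ) : ∃ g ∈ GInt, w + g ∈ unitBox := by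
  refine ⟨((-⌊w.re⌋ : ℤ) : ℂ) + ((-⌊w.im⌋ : ℤ) : ℂ) * Complex.I,
    ⟨-⌊w.re⌋, -⌊w.im⌋, rfl⟩, ?_, ?_⟩
  · have : (w + (((-⌊w.re⌋ : ℤ) : ℂ) + ((-⌊w.im⌋ : ℤ) : ℂ) * Complex.I)).re
        = Int.fract w.re := by
      simp [Complex.add_re, Complex.mul_re]
      ring_nf
      rw [Int.fract]
    rw [this]
    exact ⟨Int.fract_nonneg _, (Int.fract_lt_one _).le⟩
  · have : (w + (((-⌊w.re⌋ : ℤ) : ℂ) + ((-⌊w.im⌋ : ℤ) : ℂ) * Complex.I)).im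
        = Int.fract w.im := by
      simp [Complex.add_im, Complex.mul_im]
      ring_nf
      rw [Int.fract]
    rw [this]
    exact ⟨Int.fract_nonneg _, (Int.fract_lt_one _).le⟩

theorem iwasawa_compact : CompactSpace IwasawaQuot := by
  constructor
  have hK : IsCompact (unitBox ×ˢ unitBox ×ˢ unitBox :
      Set (ℂ × ℂ × ℂ)) :=
    unitBox_compact.prod (unitBox_compact.prod unitBox_compact)
  have hsurj : (Set.univ : Set IwasawaQuot) =
      Quot.mk gammaEquiv '' (unitBox ×ˢ unitBox ×ˢ unitBox) := by
    apply Set.eq_of_subset_of_subset _ (Set.subset_univ _)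
    rintro q -
    induction q using Quot.ind with
    | _ z =>
      obtain ⟨g1, hg1, h1⟩ := exists_gint_add_mem z.1
      obtain ⟨g2, hg2, h2⟩ := exists_gint_add_mem z.2.1
      obtain ⟨g3, hg3, h3⟩ := exists_gint_add_mem (g1 * z.2.1 + z.2.2)
      refine ⟨heisMul (g1, g2, g3) z, ⟨?_, ?_, ?_⟩,
        (Quot.sound ⟨(g1, g2, g3), ⟨hg1, hg2, hg3⟩, rfl⟩).symm⟩
      · simpa [heisMul, add_comm] using h1
      · simpa [heisMul, add_comm] using h2
      · have : (heisMul (g1, g2, g3) z).2.2 = g1 * z.2.1 + z.2.2 + g3 := by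
          simp [heisMul]; ring
        rw [this]; exact h3
  rw [hsurj]
  exact hK.image continuous_quot_mk
end
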